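/- Let W be a discrete real-valued random variable, let F(w) = P[W' ≤ w] be its CDF (with W' an independent copy), and let AC(W) = max_w P[W = w]. Then for any a ∈ [0,1], a − AC(W) < P[F(W) ≤ a] ≤ a. -/

import Mathlib

open MeasureTheory

open ProbabilityTheory Set Filter Topology Function in
/-- For a discrete real random variable `W` with CDF `F` and maximum atom probability `AC`,
for any `a ∈ [0,1]`, `a - AC < P[F(W) ≤ a] ≤ a`. -/
theorem stmt_0 {Ω : Type*} [MeasurableSpace Ω] (μ : Measure Ω) [IsProbabilityMeasure μ]
    (W : Ω → ℝ) (hW : Measurable W) (hdisc : (Set.range W).Countable)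
    (F : ℝ → ℝ) (hF : ∀ w, F w = (μ {ω | W ω ≤ w}).toReal)
    (AC : ℝ) (hAC : AC = ⨆ w : ℝ, (μ {ω | W ω = w}).toReal)
    (a : ℝ) (ha : a ∈ Set.Icc (0:ℝ) 1) :
    a - AC < (μ {ω | F (W ω) ≤ a}).toReal ∧ (μ {ω | F (W ω) ≤ a}).toReal ≤ a := by
  set ν : Measure ℝ := μ.map W with hν
  have hprob : IsProbabilityMeasure ν := Measure.isProbabilityMeasure_map hW.aemeasurable
  have hmap : ∀ s : Set ℝ, MeasurableSet s → ν s = μ (W ⁻¹' s) :=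
    fun s hs => Measure.map_apply hW hs
  -- F equals the cdf of ν
  have hFc : ∀ w, F w = cdf ν w := by
    intro w
    rw [hF w, cdf_eq_real, measureReal_def]
    congr 1
    rw [hmap _ measurableSet_Iic]
    rfl
  have hFmono : Monotone F := by
    intro x y hxy; rw [hFc, hFc]; exact monotone_cdf ν hxy
  -- atom facts
  have hatom : ∀ w : ℝ, μ {ω | W ω = w} = ν {w} := by
    intro w
    rw [hmap _ (measurableSet_singleton w)]
    rfl
  have htoReal_le_one : ∀ s : Set Ω, (μ s).toReal ≤ 1 := by
    intro s
    have h1 : μ s ≤ 1 := prob_le_one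
    calc (μ s).toReal ≤ (1 : ENNReal).toReal :=
          ENNReal.toReal_mono (by simp) h1
      _ = 1 := by simp
  have hbdd : BddAbove (Set.range fun w : ℝ => (μ {ω | W ω = w}).toReal) := by
    refine ⟨1, ?_⟩
    rintro x ⟨w, rfl⟩
    exact htoReal_le_one _
  have hACge : ∀ w : ℝ, (ν {w}).toReal ≤ AC := by
    intro w
    rw [← hatom w, hAC]
    exact le_ciSup hbdd w
  have hACpos : 0 < AC := by
    by_contra h
    push_neg at h
    have hz : ∀ w : ℝ, ν {w} = 0 := by
      intro w
      have h1 : (ν {w}).toReal = 0 :=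
        le_antisymm (le_trans (hACge w) h) ENNReal.toReal_nonneg
      exact ((ENNReal.toReal_eq_zero_iff _).mp h1).resolve_right (measure_ne_top _ _)
    have hr : ν (Set.range W) = 0 := by
      rw [← Set.biUnion_of_singleton (Set.range W)]
      exact (measure_biUnion_null_iff hdisc).mpr fun w _ => hz w
    have hr1 : ν (Set.range W) = 1 := by
      rw [hmap _ hdisc.measurableSet]
      have : W ⁻¹' Set.range W = Set.univ := by
        ext ω; simp [Set.mem_range]
      rw [this, measure_univ]
    rw [hr] at hr1
    exact one_ne_zero hr1.symm
  -- the sub-level set of F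
  set S : Set ℝ := {w : ℝ | F w ≤ a} with hS
  have hSmeas : MeasurableSet S := hFmono.measurable measurableSet_Iic
  have hdown : ∀ ⦃w w' : ℝ⦄, w' ≤ w → w ∈ S → w' ∈ S :=
    fun w w' hle hw => le_trans (hFmono hle) hw
  have hmain : μ {ω | F (W ω) ≤ a} = ν S := by
    rw [hmap S hSmeas]; rfl
  rw [hmain]
  by_cases hne : S.Nonempty
  · by_cases hb : BddAbove S
    · -- S nonempty bounded above
      set t : ℝ := sSup S with htdef
      by_cases htS : t ∈ S
      · -- S = Iic t, P = F t
        have hSt : S = Set.Iic t := by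
          ext w
          exact ⟨fun hw => le_csSup hb hw, fun hw => hdown hw htS⟩
        have hPF : (ν S).toReal = F t := by
          rw [hSt, hFc, cdf_eq_real, measureReal_def]
        rw [hPF]
        have haleF : a ≤ F t := by
          rw [hFc]
          have htend : Tendsto (cdf ν) (𝓝[>] t) (𝓝 (cdf ν t)) :=
            ((cdf ν).right_continuous t).tendsto.mono_left
              (nhdsWithin_mono t Set.Ioi_subset_Ici_self)
          refine ge_of_tendsto htend ?_
          filter_upwards [eventually_mem_nhdsWithin] with w hw
          have hwS : w ∉ S := fun hmem => absurd (le_csSup hb hmem) (not_le.mpr hw)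
          have h2 : a < F w := lt_of_not_ge hwS
          rw [hFc] at h2
          exact h2.le
        exact ⟨lt_of_lt_of_le (by linarith) haleF, htS⟩
      · -- S = Iio t
        have haltF : a < F t := lt_of_not_ge htS
        have hSt : S = Set.Iio t := by
          ext w
          constructor
          · intro hw
            exact lt_of_le_of_ne (le_csSup hb hw) (by rintro rfl; exact htS hw)
          · intro hw
            obtain ⟨s, hsS, hws⟩ := exists_lt_of_lt_csSup hne hw
            exact hdown hws.le hsS
        -- measure computations via the Stieltjes function cdf ν
        have hIic : ν (Set.Iic t) = ENNReal.ofReal (cdf ν t) := by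
          conv_lhs => rw [← measure_cdf ν]
          rw [StieltjesFunction.measure_Iic _ (tendsto_cdf_atBot ν), sub_zero]
        have hsing : ν {t} = ENNReal.ofReal (cdf ν t - leftLim (cdf ν) t) := by
          conv_lhs => rw [← measure_cdf ν]
          rw [StieltjesFunction.measure_singleton]
        have hllnonneg : 0 ≤ leftLim (cdf ν) t := by
          refine ge_of_tendsto ((monotone_cdf ν).tendsto_leftLim t) ?_
          filter_upwards with w using cdf_nonneg ν w
        have hllle : leftLim (cdf ν) t ≤ cdf ν t := (monotone_cdf ν).leftLim_le le_rfl
        have hIio : ν (Set.Iio t) = ENNReal.ofReal (leftLim (cdf ν) t) := by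
          have hsplit : ν (Set.Iic t) = ν (Set.Iio t) + ν {t} := by
            rw [← measure_union (Set.disjoint_singleton_right.mpr (by simp)) (measurableSet_singleton t)]
            congr 1
            ext x
            simp [le_iff_lt_or_eq]
          have hlt : ν {t} ≤ ν (Set.Iic t) := measure_mono (by simp)
          have : ν (Set.Iio t) = ν (Set.Iic t) - ν {t} := by
            rw [hsplit]
            rw [ENNReal.add_sub_cancel_right (measure_ne_top _ _)]
          rw [this, hIic, hsing, ← ENNReal.ofReal_sub _ (by linarith)]
          congr 1
          ring
        have hPll : (ν S).toReal = leftLim (cdf ν) t := by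
          rw [hSt, hIio, ENNReal.toReal_ofReal hllnonneg]
        constructor
        · -- lower bound
          have hμt : (ν {t}).toReal = cdf ν t - leftLim (cdf ν) t := by
            rw [hsing, ENNReal.toReal_ofReal (by linarith)]
          have h1 : cdf ν t - leftLim (cdf ν) t ≤ AC := hμt ▸ hACge t
          have h2 : a < cdf ν t := by rw [← hFc]; exact haltF
          rw [hPll]; linarith
        · -- upper bound
          rw [hPll]
          refine le_of_tendsto ((monotone_cdf ν).tendsto_leftLim t) ?_
          filter_upwards [eventually_mem_nhdsWithin] with w hw
          have : w ∈ S := hSt ▸ hw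
          rw [hS] at this
          rw [← hFc]
          exact this
    · -- S not bounded above : S = univ
      have hSuniv : S = Set.univ := by
        rw [not_bddAbove_iff] at hb
        ext x
        simp only [Set.mem_univ, iff_true]
        obtain ⟨y, hyS, hxy⟩ := hb x
        exact hdown hxy.le hyS
      have h1a : (1 : ℝ) ≤ a := by
        have : ∀ w, cdf ν w ≤ a := by
          intro w
          have : w ∈ S := hSuniv ▸ Set.mem_univ w
          rw [hS] at this; rw [← hFc]; exact this
        exact le_of_tendsto (tendsto_cdf_atTop ν) (Filter.Eventually.of_forall this)
      have : (ν S).toReal = 1 := by rw [hSuniv, measure_univ]; simp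
      rw [this]
      exact ⟨by linarith [ha.2], h1a⟩
  · -- S empty
    rw [Set.not_nonempty_iff_eq_empty] at hne
    have ha0 : a ≤ 0 := by
      have : ∀ w, a ≤ cdf ν w := by
        intro w
        have : w ∉ S := hne ▸ Set.notMem_empty w
        rw [hS] at this
        rw [← hFc]
        exact (lt_of_not_ge this).le
      exact ge_of_tendsto (tendsto_cdf_atBot ν) (Filter.Eventually.of_forall this)
    have : (ν S).toReal = 0 := by rw [hne]; simp
    rw [this]
    exact ⟨by linarith, ha.1⟩
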